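/- Define on c₀ the norm |‖x‖| = ‖x‖∞ + ‖(xₙ/2ⁿ)ₙ‖₂, where ‖·‖₂ is the ℓ₂ norm. Then |‖·‖| is a norm on c₀ equivalent to the sup norm, it is a lattice norm (|x| ≤ |y| coordinatewise implies |‖x‖| ≤ |‖y‖|), and the resulting Banach space Y = (c₀, |‖·‖|) is strictly convex. -/
import Mathlib


open ZeroAtInfty
open scoped ENNReal NNReal

/-- The norm `|‖x‖| = ‖x‖∞ + ‖(xₙ/2ⁿ)ₙ‖₂` on `c₀`. -/
noncomputable def tripleNorm (x : C₀(ℕ, ℝ)) : ℝ :=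
  ‖x‖ + Real.sqrt (∑' n : ℕ, (x n / 2 ^ n) ^ 2)

lemma abs_apply_le_norm (x : C₀(ℕ, ℝ)) (n : ℕ) : |x n| ≤ ‖x‖ := by
  rw [← ZeroAtInftyContinuousMap.norm_toBCF_eq_norm, ← Real.norm_eq_abs]
  exact x.toBCF.norm_coe_le_norm n

lemma summable_sq (x : C₀(ℕ, ℝ)) : Summable (fun n : ℕ => (x n / 2 ^ n) ^ 2) := by
  have hg : Summable (fun n : ℕ => ‖x‖ ^ 2 * (1/4 : ℝ) ^ n) :=
    (summable_geometric_of_lt_one (by norm_num) (by norm_num : (1/4 : ℝ) < 1)).mul_left _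
  refine Summable.of_nonneg_of_le (fun n => sq_nonneg _) (fun n => ?_) hg
  have h1 : |x n| ≤ ‖x‖ := abs_apply_le_norm x n
  have h2 : (x n) ^ 2 ≤ ‖x‖ ^ 2 := by
    rw [← sq_abs]
    exact pow_le_pow_left₀ (abs_nonneg _) h1 2
  have h4 : ((2:ℝ) ^ n) ^ 2 = (4 : ℝ) ^ n := by
    rw [← pow_mul, mul_comm, pow_mul]; norm_num
  calc (x n / 2 ^ n) ^ 2 = x n ^ 2 * ((4:ℝ) ^ n)⁻¹ := by rw [div_pow, h4, div_eq_mul_inv]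
    _ ≤ ‖x‖ ^ 2 * ((4:ℝ) ^ n)⁻¹ := mul_le_mul_of_nonneg_right h2 (by positivity)
    _ = ‖x‖ ^ 2 * (1/4 : ℝ) ^ n := by rw [one_div, inv_pow]

/-- The map sending `x` to `(xₙ/2ⁿ)ₙ ∈ ℓ²`. -/
noncomputable def Tmap (x : C₀(ℕ, ℝ)) : lp (fun _ : ℕ => ℝ) 2 :=
  ⟨fun n => x n / 2 ^ n, memℓp_gen ((summable_sq x).congr fun n => by
    rw [show ((2 : ℝ≥0∞).toReal) = ((2:ℕ):ℝ) from by norm_num, Real.rpow_natCast,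
      Real.norm_eq_abs, sq_abs])⟩

lemma Tmap_apply (x : C₀(ℕ, ℝ)) (n : ℕ) : (Tmap x : ∀ _ : ℕ, ℝ) n = x n / 2 ^ n := rfl

lemma norm_Tmap (x : C₀(ℕ, ℝ)) : ‖Tmap x‖ = Real.sqrt (∑' n : ℕ, (x n / 2 ^ n) ^ 2) := by
  rw [lp.norm_eq_tsum_rpow (by norm_num) (Tmap x), Real.sqrt_eq_rpow]
  have hts : (∑' n : ℕ, ‖(Tmap x : ∀ _ : ℕ, ℝ) n‖ ^ (2 : ℝ≥0∞).toReal)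
      = ∑' n : ℕ, (x n / 2 ^ n) ^ 2 := by
    refine tsum_congr fun n => ?_
    rw [show ((2 : ℝ≥0∞).toReal) = ((2:ℕ):ℝ) from by norm_num, Real.rpow_natCast,
      Real.norm_eq_abs, sq_abs]
    rfl
  rw [hts, show (1 / (2 : ℝ≥0∞).toReal) = (1/2 : ℝ) from by norm_num]

lemma tripleNorm_eq (x : C₀(ℕ, ℝ)) : tripleNorm x = ‖x‖ + ‖Tmap x‖ := by
  rw [tripleNorm, norm_Tmap]

lemma Tmap_add (x y : C₀(ℕ, ℝ)) : Tmap (x + y) = Tmap x + Tmap y := by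
  apply lp.ext
  funext n
  show ((x + y) n) / 2 ^ n = x n / 2 ^ n + y n / 2 ^ n
  rw [ZeroAtInftyContinuousMap.coe_add]
  simp [add_div]

lemma tripleNorm_nonneg (x : C₀(ℕ, ℝ)) : 0 ≤ tripleNorm x := by
  rw [tripleNorm_eq]; positivity

/-- `|‖·‖|` is a norm on `c₀`, equivalent to the sup norm, it is a lattice norm, and the
resulting space is strictly convex. -/
theorem tripleNorm_is_strictly_convex_lattice_norm :
    (∀ x : C₀(ℕ, ℝ), tripleNorm x = 0 ↔ x = 0)
    ∧ (∀ (c : ℝ) (x : C₀(ℕ, ℝ)), tripleNorm (c • x) = |c| * tripleNorm x)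
    ∧ (∀ x y : C₀(ℕ, ℝ), tripleNorm (x + y) ≤ tripleNorm x + tripleNorm y)
    ∧ (∃ a b : ℝ, 0 < a ∧ 0 < b ∧
        ∀ x : C₀(ℕ, ℝ), a * ‖x‖ ≤ tripleNorm x ∧ tripleNorm x ≤ b * ‖x‖)
    ∧ (∀ x y : C₀(ℕ, ℝ), (∀ n, |x n| ≤ |y n|) → tripleNorm x ≤ tripleNorm y)
    ∧ (∀ x y : C₀(ℕ, ℝ), tripleNorm x = 1 → tripleNorm y = 1 → x ≠ y →
        tripleNorm (x + y) < 2) := by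
  have hsmul : ∀ (c : ℝ) (x : C₀(ℕ, ℝ)), tripleNorm (c • x) = |c| * tripleNorm x := by
    intro c x
    have hT : Tmap (c • x) = c • Tmap x := by
      apply lp.ext
      funext n
      show ((c • x) n) / 2 ^ n = c * (x n / 2 ^ n)
      rw [ZeroAtInftyContinuousMap.coe_smul]
      simp [mul_div_assoc]
    have h5 : ‖c • x‖ = ‖c‖ * ‖x‖ := norm_smul c x
    have h6 : ‖c • Tmap x‖ = ‖c‖ * ‖Tmap x‖ := norm_smul c (Tmap x)
    rw [tripleNorm_eq, tripleNorm_eq, hT, h5, h6, Real.norm_eq_abs, mul_add]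
  have hzero : ∀ x : C₀(ℕ, ℝ), tripleNorm x = 0 ↔ x = 0 := by
    intro x
    constructor
    · intro h
      have h1 : ‖x‖ ≤ 0 := by
        rw [tripleNorm_eq] at h
        nlinarith [norm_nonneg (Tmap x), norm_nonneg x]
      exact norm_le_zero_iff.mp h1
    · rintro rfl
      have := hsmul 0 (0 : C₀(ℕ, ℝ))
      simpa using this
  have htri : ∀ x y : C₀(ℕ, ℝ), tripleNorm (x + y) ≤ tripleNorm x + tripleNorm y := by
    intro x y
    rw [tripleNorm_eq, tripleNorm_eq, tripleNorm_eq, Tmap_add]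
    have := norm_add_le x y
    have := norm_add_le (Tmap x) (Tmap y)
    linarith
  refine ⟨hzero, hsmul, htri, ?_, ?_, ?_⟩
  · refine ⟨1, 3, one_pos, by norm_num, fun x => ?_⟩
    constructor
    · rw [one_mul, tripleNorm]
      nlinarith [Real.sqrt_nonneg (∑' n : ℕ, (x n / 2 ^ n) ^ 2)]
    · rw [tripleNorm]
      have hle : (∑' n : ℕ, (x n / 2 ^ n) ^ 2) ≤ ‖x‖ ^ 2 * (4/3) := by
        have hsum : Summable (fun n : ℕ => ‖x‖ ^ 2 * (1/4 : ℝ) ^ n) :=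
          (summable_geometric_of_lt_one (by norm_num) (by norm_num)).mul_left _
        have h1 : (∑' n : ℕ, (x n / 2 ^ n) ^ 2) ≤ ∑' n : ℕ, ‖x‖ ^ 2 * (1/4 : ℝ) ^ n := by
          refine Summable.tsum_le_tsum (fun n => ?_) (summable_sq x) hsum
          have h1 : |x n| ≤ ‖x‖ := abs_apply_le_norm x n
          have h2 : (x n) ^ 2 ≤ ‖x‖ ^ 2 := by
            rw [← sq_abs]; exact pow_le_pow_left₀ (abs_nonneg _) h1 2
          have h4 : ((2:ℝ) ^ n) ^ 2 = (4 : ℝ) ^ n := by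
            rw [← pow_mul, mul_comm, pow_mul]; norm_num
          rw [div_pow, h4]
          rw [div_eq_mul_inv]
          calc (x n) ^ 2 * ((4:ℝ) ^ n)⁻¹ ≤ ‖x‖ ^ 2 * ((4:ℝ) ^ n)⁻¹ :=
                mul_le_mul_of_nonneg_right h2 (by positivity)
            _ = ‖x‖ ^ 2 * (1/4 : ℝ) ^ n := by rw [one_div, inv_pow]
        rw [tsum_mul_left, tsum_geometric_of_lt_one (by norm_num) (by norm_num)] at h1
        calc (∑' n : ℕ, (x n / 2 ^ n) ^ 2) ≤ ‖x‖ ^ 2 * (1 - 1/4 : ℝ)⁻¹ := h1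
          _ = ‖x‖ ^ 2 * (4/3) := by norm_num
      have hs : Real.sqrt (∑' n : ℕ, (x n / 2 ^ n) ^ 2) ≤ 2 * ‖x‖ := by
        calc Real.sqrt (∑' n : ℕ, (x n / 2 ^ n) ^ 2) ≤ Real.sqrt (‖x‖ ^ 2 * 4) := by
              apply Real.sqrt_le_sqrt; nlinarith [norm_nonneg x]
          _ = 2 * ‖x‖ := by
              rw [show ‖x‖ ^ 2 * 4 = (2 * ‖x‖) ^ 2 by ring]
              exact Real.sqrt_sq (by positivity)
      linarith
  · intro x y h
    rw [tripleNorm, tripleNorm]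
    have h1 : ‖x‖ ≤ ‖y‖ := by
      rw [← ZeroAtInftyContinuousMap.norm_toBCF_eq_norm (f := x)]
      refine (BoundedContinuousFunction.norm_le (norm_nonneg y)).mpr fun n => ?_
      calc ‖x.toBCF n‖ = |x n| := Real.norm_eq_abs _
        _ ≤ |y n| := h n
        _ ≤ ‖y‖ := abs_apply_le_norm y n
    have h2 : Real.sqrt (∑' n : ℕ, (x n / 2 ^ n) ^ 2) ≤
        Real.sqrt (∑' n : ℕ, (y n / 2 ^ n) ^ 2) := by
      apply Real.sqrt_le_sqrt
      refine Summable.tsum_le_tsum (fun n => ?_) (summable_sq x) (summable_sq y)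
      rw [div_pow, div_pow, ← sq_abs (x n), ← sq_abs (y n)]
      exact div_le_div_of_nonneg_right
        (pow_le_pow_left₀ (abs_nonneg _) (h n) 2) (by positivity) |>.trans_eq rfl
    linarith
  · intro x y hx hy hxy
    have hTne : ¬ SameRay ℝ (Tmap x) (Tmap y) := by
      intro hray
      have hTinj : ∀ u v : C₀(ℕ, ℝ), Tmap u = Tmap v → u = v := by
        intro u v huv
        ext n
        have h' : u n / 2 ^ n = v n / 2 ^ n :=
          congrFun (congrArg (fun (f : lp (fun _ : ℕ => ℝ) 2) => (f : ∀ _ : ℕ, ℝ)) huv) n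
        have h2 : (2:ℝ) ^ n ≠ 0 := by positivity
        field_simp at h'
        exact h'
      rcases hray with h0 | h0 | ⟨r₁, r₂, hr₁, hr₂, hrr⟩
      · -- Tmap x = 0, hence x = 0
        have : x = 0 := by
          apply hTinj
          rw [h0]
          apply lp.ext; funext n
          show (0:ℝ) = (0 : C₀(ℕ, ℝ)) n / 2 ^ n
          simp
        rw [this] at hx
        rw [(hzero 0).mpr rfl] at hx
        norm_num at hx
      · have : y = 0 := by
          apply hTinj
          rw [h0]
          apply lp.ext; funext n
          show (0:ℝ) = (0 : C₀(ℕ, ℝ)) n / 2 ^ n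
          simp
        rw [this] at hy
        rw [(hzero 0).mpr rfl] at hy
        norm_num at hy
      · -- r₁ • Tmap x = r₂ • Tmap y, so y = (r₁/r₂) • x
        have hyx : y = (r₁ / r₂) • x := by
          ext n
          have h1 : r₁ * (x n / 2 ^ n) = r₂ * (y n / 2 ^ n) :=
            congrFun (congrArg (fun (f : lp (fun _ : ℕ => ℝ) 2) => (f : ∀ _ : ℕ, ℝ)) hrr) n
          have hne : (2:ℝ) ^ n ≠ 0 := by positivity
          show y n = ((r₁ / r₂) • x) n
          rw [ZeroAtInftyContinuousMap.coe_smul]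
          show y n = (r₁ / r₂) * x n
          field_simp at h1 ⊢
          linarith
        have h1 : (1:ℝ) = |r₁ / r₂| := by
          calc (1:ℝ) = tripleNorm y := hy.symm
            _ = tripleNorm ((r₁ / r₂) • x) := by rw [← hyx]
            _ = |r₁ / r₂| * tripleNorm x := hsmul _ _
            _ = |r₁ / r₂| := by rw [hx, mul_one]
        have h2 : r₁ / r₂ = 1 := by
          have := abs_of_pos (div_pos hr₁ hr₂)
          rw [this] at h1
          linarith
        rw [h2, one_smul] at hyx
        exact hxy hyx.symm
    have hlt : ‖Tmap x + Tmap y‖ < ‖Tmap x‖ + ‖Tmap y‖ := norm_add_lt_of_not_sameRay hTne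
    have h3 : tripleNorm (x + y) = ‖x + y‖ + ‖Tmap x + Tmap y‖ := by
      rw [tripleNorm_eq, Tmap_add]
    have h4 : ‖x + y‖ ≤ ‖x‖ + ‖y‖ := norm_add_le x y
    have hx' := tripleNorm_eq x
    have hy' := tripleNorm_eq y
    rw [hx] at hx'
    rw [hy] at hy'
    linarith
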